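/- Let Ψ : [0,π] → [0,π] be a measurable function that is monotone, super-additive, and symmetric in π−θ, and suppose that for every continuous convex function F : [0,π] → ℝ one has ∫₀^π F(Ψ(θ))·sin θ dθ ≤ ∫₀^π F(θ)·sin θ dθ. Then Ψ is the identity, i.e. Ψ(θ) = θ for every θ ∈ [0,π]. -/

import Mathlib

open Real MeasureTheory Set

/-- A measurable function bounded on `[a,b]` is interval integrable. -/
lemma otal_aux_intervalIntegrable {f : ℝ → ℝ} {a b C : ℝ} (hab : a ≤ b) (hm : Measurable f)
    (hb : ∀ x ∈ Set.Icc a b, |f x| ≤ C) : IntervalIntegrable f volume a b := by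
  rw [intervalIntegrable_iff_integrableOn_Ioc_of_le hab]
  apply Measure.integrableOn_of_bounded (M := C)
  · simp [Real.volume_Ioc]
  · exact hm.aestronglyMeasurable
  · rw [ae_restrict_iff' measurableSet_Ioc]
    exact ae_of_all _ fun x hx => by
      rw [Real.norm_eq_abs]; exact hb x ⟨hx.1.le, hx.2⟩

/-- Strict tangent line inequality for `sin` on `[0, π]`. -/
lemma otal_aux_sin_tangent_lt {x y : ℝ} (hx : x ∈ Set.Icc 0 π) (hy : y ∈ Set.Icc 0 π)
    (hne : y ≠ x) : Real.sin y < Real.sin x + Real.cos x * (y - x) := by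
  rcases lt_or_gt_of_ne hne with h | h
  · -- y < x
    obtain ⟨c, hc, hceq⟩ := exists_hasDerivAt_eq_slope Real.sin Real.cos h
      Real.continuous_sin.continuousOn (fun z _ => Real.hasDerivAt_sin z)
    have hcx : Real.cos x < Real.cos c :=
      Real.strictAntiOn_cos ⟨hy.1.trans hc.1.le, hc.2.le.trans hx.2⟩ hx hc.2
    have hxy : (0:ℝ) < x - y := by linarith
    have heq : Real.sin x - Real.sin y = Real.cos c * (x - y) := by
      field_simp at hceq; linarith
    nlinarith
  · -- x < y
    obtain ⟨c, hc, hceq⟩ := exists_hasDerivAt_eq_slope Real.sin Real.cos h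
      Real.continuous_sin.continuousOn (fun z _ => Real.hasDerivAt_sin z)
    have hcx : Real.cos c < Real.cos x :=
      Real.strictAntiOn_cos hx ⟨hx.1.trans hc.1.le, hc.2.le.trans hy.2⟩ hc.1
    have hxy : (0:ℝ) < y - x := by linarith
    have heq : Real.sin y - Real.sin x = Real.cos c * (y - x) := by
      field_simp at hceq; linarith
    nlinarith

/-- Tangent line inequality for `sin` on `[0, π]`. -/
lemma otal_aux_sin_tangent_le {x y : ℝ} (hx : x ∈ Set.Icc 0 π) (hy : y ∈ Set.Icc 0 π) :
    Real.sin y ≤ Real.sin x + Real.cos x * (y - x) := by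
  rcases eq_or_ne y x with rfl | hne
  · simp
  · exact (otal_aux_sin_tangent_lt hx hy hne).le

/-- Measurable extension of Otal's lemma: a measurable, monotone, super-additive
function `Ψ : [0,π] → [0,π]` which is symmetric in `π - θ` and satisfies
`∫₀^π F(Ψ θ) sin θ dθ ≤ ∫₀^π F(θ) sin θ dθ` for every continuous convex `F`
must be the identity. -/
theorem otal_lemma_measurable (Ψ : ℝ → ℝ)
    (hmeas : Measurable Ψ)
    (hmaps : ∀ θ ∈ Icc (0:ℝ) π, Ψ θ ∈ Icc (0:ℝ) π)
    (hmono : ∀ θ₁ ∈ Icc (0:ℝ) π, ∀ θ₂ ∈ Icc (0:ℝ) π, θ₁ ≤ θ₂ → Ψ θ₁ ≤ Ψ θ₂)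
    (hsuper : ∀ θ₁ ∈ Icc (0:ℝ) π, ∀ θ₂ ∈ Icc (0:ℝ) π, θ₁ + θ₂ ≤ π →
      Ψ θ₁ + Ψ θ₂ ≤ Ψ (θ₁ + θ₂))
    (hsym : ∀ θ ∈ Icc (0:ℝ) π, Ψ (π - θ) = π - Ψ θ)
    (hint : ∀ F : ℝ → ℝ, ContinuousOn F (Icc (0:ℝ) π) → ConvexOn ℝ (Icc (0:ℝ) π) F →
      ∫ θ in (0:ℝ)..π, F (Ψ θ) * Real.sin θ ≤ ∫ θ in (0:ℝ)..π, F θ * Real.sin θ) :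
    ∀ θ ∈ Icc (0:ℝ) π, Ψ θ = θ := by
  have hπ : (0:ℝ) < π := Real.pi_pos
  have h0m : (0:ℝ) ∈ Icc (0:ℝ) π := ⟨le_rfl, hπ.le⟩
  have hpm : π ∈ Icc (0:ℝ) π := ⟨hπ.le, le_rfl⟩
  have hhalf : π/2 ∈ Icc (0:ℝ) π := ⟨by positivity, by linarith⟩
  -- basic values
  have hΨ0 : Ψ 0 = 0 := by
    have h1 := hsuper 0 h0m 0 h0m (by simpa using hπ.le)
    have h2 := (hmaps 0 h0m).1
    simp only [add_zero] at h1
    linarith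
  have hΨπ : Ψ π = π := by
    have := hsym 0 h0m
    simp only [sub_zero] at this
    rw [this, hΨ0, sub_zero]
  have hΨhalf : Ψ (π/2) = π/2 := by
    have := hsym (π/2) hhalf
    rw [show π - π/2 = π/2 by ring] at this
    linarith
  -- the key superadditivity consequence
  have key : ∀ u ∈ Icc (0:ℝ) (π/2), Ψ u + π/2 ≤ Ψ (u + π/2) := by
    intro u hu
    have := hsuper u ⟨hu.1, by linarith [hu.2]⟩ (π/2) hhalf (by linarith [hu.2])
    rwa [hΨhalf] at this
  -- bound on Ψ - id
  have hbd : ∀ x ∈ Icc (0:ℝ) π, |Ψ x - x| ≤ π := by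
    intro x hx
    have h1 := (hmaps x hx).1
    have h2 := (hmaps x hx).2
    rw [abs_le]
    constructor <;> [linarith [hx.2]; linarith [hx.1]]
  -- integrands
  set f₁ : ℝ → ℝ := fun θ => Real.cos θ * (Ψ θ - θ) * Real.sin θ with hf₁def
  have hf₁meas : Measurable f₁ :=
    (Real.measurable_cos.mul (hmeas.sub measurable_id)).mul Real.measurable_sin
  have hf₁bd : ∀ x ∈ Icc (0:ℝ) π, |f₁ x| ≤ π := by
    intro x hx
    have h1 : |Real.cos x| ≤ 1 := Real.abs_cos_le_one x
    have h2 : |Real.sin x| ≤ 1 := Real.abs_sin_le_one x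
    have h3 := hbd x hx
    have h4 : |f₁ x| = |Real.cos x| * |Ψ x - x| * |Real.sin x| := by
      rw [hf₁def]; simp [abs_mul]
    rw [h4]
    have h5 : (0:ℝ) ≤ |Ψ x - x| := abs_nonneg _
    have h6 : |Real.cos x| * |Ψ x - x| ≤ |Ψ x - x| := mul_le_of_le_one_left h5 h1
    have h7 : |Real.cos x| * |Ψ x - x| * |Real.sin x| ≤ |Real.cos x| * |Ψ x - x| :=
      mul_le_of_le_one_right (by positivity) h2
    linarith
  have hint₁ : IntervalIntegrable f₁ volume 0 (π/2) :=
    otal_aux_intervalIntegrable (by positivity) hf₁meas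
      (fun x hx => hf₁bd x ⟨hx.1, by linarith [hx.2]⟩)
  have hint₂ : IntervalIntegrable f₁ volume (π/2) π :=
    otal_aux_intervalIntegrable (by linarith) hf₁meas
      (fun x hx => hf₁bd x ⟨by linarith [hx.1], hx.2⟩)
  have hint₁' : IntervalIntegrable (fun u => f₁ (u + π/2)) volume 0 (π/2) :=
    otal_aux_intervalIntegrable (by positivity)
      (hf₁meas.comp (measurable_id.add_const _))
      (fun x hx => hf₁bd (x + π/2) ⟨by linarith [hx.1], by linarith [hx.2]⟩)
  -- Step B : ∫ f₁ ≤ 0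
  have hM : (∫ θ in (0:ℝ)..π, f₁ θ) ≤ 0 := by
    have hsplit : (∫ θ in (0:ℝ)..(π/2), f₁ θ) + (∫ θ in (π/2:ℝ)..π, f₁ θ)
        = ∫ θ in (0:ℝ)..π, f₁ θ :=
      intervalIntegral.integral_add_adjacent_intervals hint₁ hint₂
    have hshift : (∫ θ in (π/2:ℝ)..π, f₁ θ) = ∫ u in (0:ℝ)..(π/2), f₁ (u + π/2) := by
      rw [intervalIntegral.integral_comp_add_right (a := (0:ℝ)) (b := π/2) f₁ (π/2)]
      norm_num
    have hcomb : (∫ θ in (0:ℝ)..(π/2), f₁ θ) + (∫ u in (0:ℝ)..(π/2), f₁ (u + π/2))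
        = ∫ u in (0:ℝ)..(π/2), (f₁ u + f₁ (u + π/2)) :=
      (intervalIntegral.integral_add hint₁ hint₁').symm
    have hptwise : ∀ u ∈ Icc (0:ℝ) (π/2), f₁ u + f₁ (u + π/2) ≤ 0 := by
      intro u hu
      have hkey := key u hu
      have hsinu : 0 ≤ Real.sin u := Real.sin_nonneg_of_nonneg_of_le_pi hu.1 (by linarith [hu.2])
      have hcosu : 0 ≤ Real.cos u := Real.cos_nonneg_of_mem_Icc ⟨by linarith [hu.1], hu.2⟩
      have hs : Real.sin (u + π/2) = Real.cos u := by
        rw [Real.sin_add]; simp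
      have hc : Real.cos (u + π/2) = -Real.sin u := by
        rw [Real.cos_add]; simp
      rw [hf₁def]
      simp only [hs, hc]
      nlinarith [mul_nonneg hsinu hcosu]
    have hle : (∫ u in (0:ℝ)..(π/2), (f₁ u + f₁ (u + π/2))) ≤ 0 := by
      have hneg : (0:ℝ) ≤ ∫ u in (0:ℝ)..(π/2), -(f₁ u + f₁ (u + π/2)) :=
        intervalIntegral.integral_nonneg (by positivity)
          (fun u hu => by linarith [hptwise u hu])
      rw [intervalIntegral.integral_neg] at hneg
      linarith
    linarith [hsplit, hshift, hcomb, hle]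
  -- Step C : hint with F = -sin
  have hconv : ConvexOn ℝ (Icc (0:ℝ) π) (fun x => -Real.sin x) :=
    strictConcaveOn_sin_Icc.neg.convexOn
  have hcont : ContinuousOn (fun x => -Real.sin x) (Icc (0:ℝ) π) :=
    Real.continuous_sin.neg.continuousOn
  have hF := hint (fun x => -Real.sin x) hcont hconv
  -- integrability of the remaining pieces
  have hg₁ : IntervalIntegrable (fun θ => -Real.sin (Ψ θ) * Real.sin θ) volume 0 π :=
    otal_aux_intervalIntegrable hπ.le
      (((Real.measurable_sin.comp hmeas).neg).mul Real.measurable_sin)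
      (fun x _ => by
        rw [abs_mul, abs_neg]
        exact mul_le_one₀ (Real.abs_sin_le_one _) (abs_nonneg _) (Real.abs_sin_le_one _))
  have hg₂ : IntervalIntegrable (fun θ => -Real.sin θ * Real.sin θ) volume 0 π :=
    otal_aux_intervalIntegrable hπ.le
      ((Real.measurable_sin.neg).mul Real.measurable_sin)
      (fun x _ => by
        rw [abs_mul, abs_neg]
        exact mul_le_one₀ (Real.abs_sin_le_one _) (abs_nonneg _) (Real.abs_sin_le_one _))
  have hint₃ : IntervalIntegrable f₁ volume 0 π :=
    otal_aux_intervalIntegrable hπ.le hf₁meas hf₁bd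
  -- Step D : the integral of P θ * sin θ is ≤ 0, where
  -- P θ = sin θ - sin (Ψ θ) + cos θ * (Ψ θ - θ)
  set P : ℝ → ℝ := fun θ => Real.sin θ - Real.sin (Ψ θ) + Real.cos θ * (Ψ θ - θ) with hPdef
  have hPsin : (fun θ => P θ * Real.sin θ)
      = fun θ => (-Real.sin (Ψ θ) * Real.sin θ - -Real.sin θ * Real.sin θ) + f₁ θ := by
    funext θ; rw [hPdef, hf₁def]; ring
  have hPint : IntervalIntegrable (fun θ => P θ * Real.sin θ) volume 0 π := by
    rw [hPsin]; exact (hg₁.sub hg₂).add hint₃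
  have hDle : (∫ θ in (0:ℝ)..π, P θ * Real.sin θ) ≤ 0 := by
    rw [hPsin]
    rw [intervalIntegral.integral_add (hg₁.sub hg₂) hint₃,
      intervalIntegral.integral_sub hg₁ hg₂]
    have := hF
    linarith [hM, this]
  -- Step E : pointwise nonnegativity, hence the integrand vanishes a.e.
  have hPnonneg : ∀ θ ∈ Icc (0:ℝ) π, 0 ≤ P θ * Real.sin θ := by
    intro θ hθ
    have h1 : Real.sin (Ψ θ) ≤ Real.sin θ + Real.cos θ * (Ψ θ - θ) :=
      otal_aux_sin_tangent_le hθ (hmaps θ hθ)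
    have h2 : 0 ≤ Real.sin θ := Real.sin_nonneg_of_nonneg_of_le_pi hθ.1 hθ.2
    have h3 : 0 ≤ P θ := by rw [hPdef]; simp only; linarith
    positivity
  have hzero : (∫ θ in (0:ℝ)..π, P θ * Real.sin θ) = 0 :=
    le_antisymm hDle (intervalIntegral.integral_nonneg hπ.le hPnonneg)
  have hae : ∀ᵐ θ ∂(volume.restrict (Ioc (0:ℝ) π)), P θ * Real.sin θ = 0 := by
    have hIoc : Ioc π (0:ℝ) = ∅ := Set.Ioc_eq_empty (by linarith)
    have hnn : 0 ≤ᵐ[volume.restrict (Ioc (0:ℝ) π ∪ Ioc π 0)] fun θ => P θ * Real.sin θ := by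
      rw [hIoc, Set.union_empty]
      exact ae_restrict_of_forall_mem measurableSet_Ioc
        fun θ hθ => hPnonneg θ ⟨hθ.1.le, hθ.2⟩
    have := (intervalIntegral.integral_eq_zero_iff_of_nonneg_ae hnn hPint).mp hzero
    rw [hIoc, Set.union_empty] at this
    filter_upwards [this] with θ hθ using hθ
  -- the set where Ψ differs from the identity in (0, π] is null
  have hbadnull : volume {θ | θ ∈ Ioc (0:ℝ) π ∧ Ψ θ ≠ θ} = 0 := by
    have h1 : ∀ᵐ θ ∂volume, θ ∈ Ioc (0:ℝ) π → P θ * Real.sin θ = 0 :=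
      (ae_restrict_iff' measurableSet_Ioc).mp hae
    have h2 : ∀ᵐ θ ∂volume, θ ∈ Ioc (0:ℝ) π → Ψ θ = θ := by
      filter_upwards [h1] with θ hθ
      intro hmem
      rcases eq_or_lt_of_le hmem.2 with rfl | hlt
      · exact hΨπ
      · have hsinpos : 0 < Real.sin θ := Real.sin_pos_of_pos_of_lt_pi hmem.1 hlt
        have hP0 : P θ = 0 := by
          have := hθ hmem
          rcases mul_eq_zero.mp this with h | h
          · exact h
          · exact absurd h hsinpos.ne'
        by_contra hne
        have := otal_aux_sin_tangent_lt (x := θ) (y := Ψ θ)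
          ⟨hmem.1.le, hlt.le⟩ (hmaps θ ⟨hmem.1.le, hmem.2⟩) hne
        rw [hPdef] at hP0
        simp only at hP0
        linarith
    rw [ae_iff] at h2
    convert h2 using 2
    ext θ
    simp only [mem_setOf_eq, Classical.not_imp, not_forall]
  -- Step F : from a.e. to everywhere, using monotonicity
  intro θ hθ
  rcases eq_or_lt_of_le hθ.1 with rfl | hpos
  · exact hΨ0
  rcases eq_or_lt_of_le hθ.2 with rfl | hltpi
  · exact hΨπ
  by_contra hne
  have hΨmem := hmaps θ ⟨hpos.le, hltpi.le⟩
  rcases lt_or_gt_of_ne hne with hlt | hgt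
  · -- Ψ θ < θ : every point of Ioo (Ψ θ) θ is bad
    have hsub : Ioo (Ψ θ) θ ⊆ {x | x ∈ Ioc (0:ℝ) π ∧ Ψ x ≠ x} := by
      intro x hx
      have hx0 : 0 < x := lt_of_le_of_lt hΨmem.1 hx.1
      have hxpi : x ≤ π := le_of_lt (hx.2.trans hltpi)
      refine ⟨⟨hx0, hxpi⟩, ?_⟩
      intro heq
      have := hmono x ⟨hx0.le, hxpi⟩ θ ⟨hpos.le, hltpi.le⟩ hx.2.le
      rw [heq] at this
      linarith [hx.1]
    have : volume (Ioo (Ψ θ) θ) ≤ volume {x | x ∈ Ioc (0:ℝ) π ∧ Ψ x ≠ x} :=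
      measure_mono hsub
    rw [hbadnull, Real.volume_Ioo] at this
    simp only [nonpos_iff_eq_zero, ENNReal.ofReal_eq_zero] at this
    linarith
  · -- Ψ θ > θ : every point of Ioo θ (Ψ θ) is bad
    have hsub : Ioo θ (Ψ θ) ⊆ {x | x ∈ Ioc (0:ℝ) π ∧ Ψ x ≠ x} := by
      intro x hx
      have hx0 : 0 < x := hpos.trans hx.1
      have hxpi : x ≤ π := le_of_lt (lt_of_lt_of_le hx.2 hΨmem.2)
      refine ⟨⟨hx0, hxpi⟩, ?_⟩
      intro heq
      have := hmono θ ⟨hpos.le, hltpi.le⟩ x ⟨hx0.le, hxpi⟩ hx.1.le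
      rw [heq] at this
      linarith [hx.2]
    have : volume (Ioo θ (Ψ θ)) ≤ volume {x | x ∈ Ioc (0:ℝ) π ∧ Ψ x ≠ x} :=
      measure_mono hsub
    rw [hbadnull, Real.volume_Ioo] at this
    simp only [nonpos_iff_eq_zero, ENNReal.ofReal_eq_zero] at this
    linarith
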